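/- Let ρ: G → GL_2(K) be a representation over a field K of characteristic ≠ 2, and suppose some element c in G satisfies ρ(c)^2 = 1 and ρ(c) ≠ ±1 (so ρ(c) has eigenvalues +1 and -1). If ρ is conjugate over an extension of K to an upper triangular representation, then ρ is conjugate to an upper triangular representation already over K. -/

import Mathlib

open Matrix

private lemma aux_cross {L : Type*} [Field L] (D : Matrix (Fin 2) (Fin 2) L) (hD : D ≠ 0)
    (x y : Fin 2 → L)
    (hx0 : D 0 0 * x 0 + D 0 1 * x 1 = 0) (hx1 : D 1 0 * x 0 + D 1 1 * x 1 = 0)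
    (hy0 : D 0 0 * y 0 + D 0 1 * y 1 = 0) (hy1 : D 1 0 * y 0 + D 1 1 * y 1 = 0) :
    x 0 * y 1 = x 1 * y 0 := by
  have hD' : D 0 0 ≠ 0 ∨ D 0 1 ≠ 0 ∨ D 1 0 ≠ 0 ∨ D 1 1 ≠ 0 := by
    by_contra h
    push_neg at h
    obtain ⟨a, b, c, d⟩ := h
    apply hD
    ext i j
    rw [Matrix.zero_apply]
    fin_cases i <;> fin_cases j
    exacts [a, b, c, d]
  rcases hD' with h | h | h | h
  · apply mul_left_cancel₀ h
    linear_combination y 1 * hx0 - x 1 * hy0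
  · apply mul_left_cancel₀ h
    linear_combination x 0 * hy0 - y 0 * hx0
  · apply mul_left_cancel₀ h
    linear_combination y 1 * hx1 - x 1 * hy1
  · apply mul_left_cancel₀ h
    linear_combination x 0 * hy1 - y 0 * hx1

private lemma aux_eig {L : Type*} [Field L] (W : Matrix (Fin 2) (Fin 2) L) (μ : L)
    (v x : Fin 2 → L) (hv : v 0 ≠ 0 ∨ v 1 ≠ 0)
    (hWv0 : W 0 0 * v 0 + W 0 1 * v 1 = μ * v 0)
    (hWv1 : W 1 0 * v 0 + W 1 1 * v 1 = μ * v 1)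
    (hcross : x 0 * v 1 = x 1 * v 0) :
    (W 0 0 * x 0 + W 0 1 * x 1) * x 1 = (W 1 0 * x 0 + W 1 1 * x 1) * x 0 := by
  rcases hv with h | h
  · apply mul_left_cancel₀ h
    linear_combination x 1 * x 0 * hWv0 - x 0 * x 0 * hWv1 +
      (W 1 1 * x 0 - W 0 1 * x 1 - μ * x 0) * hcross
  · apply mul_left_cancel₀ h
    linear_combination x 1 * x 1 * hWv0 - x 0 * x 1 * hWv1 +
      (W 0 0 * x 1 - W 1 0 * x 0 - μ * x 1) * hcross

theorem stmt_7 (K G : Type) [Field K] [Group G] (hchar : ringChar K ≠ 2)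
    (ρ : G →* GL (Fin 2) K) (c : G)
    (hc2 : ρ c ^ 2 = 1) (hc1 : ρ c ≠ 1) (hcneg : ρ c ≠ -1)
    (hext : ∃ (L : Type) (_ : Field L) (f : K →+* L)
        (M : Matrix (Fin 2) (Fin 2) L), IsUnit M ∧
        ∀ g : G, (M * ((ρ g : Matrix (Fin 2) (Fin 2) K)).map f * M⁻¹) 1 0 = 0) :
    ∃ U : (Matrix (Fin 2) (Fin 2) K)ˣ, ∀ g : G,
      ((U : Matrix (Fin 2) (Fin 2) K) * (ρ g : Matrix (Fin 2) (Fin 2) K) *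
        (↑U⁻¹ : Matrix (Fin 2) (Fin 2) K)) 1 0 = 0 := by
  obtain ⟨L, _, f, M, hM, hMtri⟩ := hext
  have hfinj : Function.Injective f := f.injective
  -- basic facts about A := ρ c as a matrix
  have hA2 : (ρ c : Matrix (Fin 2) (Fin 2) K) * (ρ c : Matrix (Fin 2) (Fin 2) K) = 1 := by
    have h := congrArg (Units.val) hc2
    simpa [sq, Units.val_mul] using h
  have hA1 : (ρ c : Matrix (Fin 2) (Fin 2) K) ≠ 1 := fun h => hc1 (Units.ext h)
  have hAneg : (ρ c : Matrix (Fin 2) (Fin 2) K) ≠ -1 := by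
    intro h
    apply hcneg
    apply Units.ext
    simpa using h
  -- the inverse of M
  have hdet : IsUnit M.det := (Matrix.isUnit_iff_isUnit_det M).mp hM
  have hMinv : M⁻¹ * M = 1 := Matrix.nonsing_inv_mul M hdet
  have hMinv' : M * M⁻¹ = 1 := Matrix.mul_nonsing_inv M hdet
  -- v := first column of M⁻¹ is a common eigenvector
  have key : ∀ W : Matrix (Fin 2) (Fin 2) L, (M * W * M⁻¹) 1 0 = 0 →
      ∀ i, W i 0 * M⁻¹ 0 0 + W i 1 * M⁻¹ 1 0 = (M * W * M⁻¹) 0 0 * M⁻¹ i 0 := by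
    intro W hW i
    have h1 : M⁻¹ * (M * W * M⁻¹) = W * M⁻¹ := by
      rw [← Matrix.mul_assoc, ← Matrix.mul_assoc, hMinv, Matrix.one_mul]
    have h2 := congrFun (congrFun h1 i) 0
    rw [Matrix.mul_apply, Matrix.mul_apply, Fin.sum_univ_two, Fin.sum_univ_two, hW] at h2
    rw [← h2]
    ring
  have hvne : M⁻¹ 0 0 ≠ 0 ∨ M⁻¹ 1 0 ≠ 0 := by
    by_contra h
    push_neg at h
    have h00 := congrFun (congrFun hMinv' 0) 0
    rw [Matrix.mul_apply, Fin.sum_univ_two, h.1, h.2] at h00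
    simp at h00
  -- the eigenvalue ε of ρ c on v
  set B : Matrix (Fin 2) (Fin 2) L := ((ρ c : Matrix (Fin 2) (Fin 2) K)).map f with hB
  set ε : L := (M * B * M⁻¹) 0 0 with hε
  have hBc : ∀ i, B i 0 * M⁻¹ 0 0 + B i 1 * M⁻¹ 1 0 = ε * M⁻¹ i 0 := key B (hMtri c)
  have hB2 : B * B = 1 := by
    rw [hB, ← Matrix.map_mul, hA2]
    exact Matrix.map_one f (map_zero f) (map_one f)
  -- ε² = 1
  have hεsq : ε * ε = 1 := by
    have q00 := congrFun (congrFun hB2 0) 0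
    have q01 := congrFun (congrFun hB2 0) 1
    have q10 := congrFun (congrFun hB2 1) 0
    have q11 := congrFun (congrFun hB2 1) 1
    rw [Matrix.mul_apply, Fin.sum_univ_two] at q00 q01 q10 q11
    rw [Matrix.one_apply_eq] at q00 q11
    rw [Matrix.one_apply_ne (by decide : (0 : Fin 2) ≠ 1)] at q01
    rw [Matrix.one_apply_ne (by decide : (1 : Fin 2) ≠ 0)] at q10
    rcases hvne with h | h
    · have hz0 : (ε * ε - 1) * M⁻¹ 0 0 = 0 := by
        linear_combination (-(ε + B 0 0)) * hBc 0 + (-(B 0 1)) * hBc 1 +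
          M⁻¹ 0 0 * q00 + M⁻¹ 1 0 * q01
      rcases mul_eq_zero.mp hz0 with h' | h'
      · exact sub_eq_zero.mp h'
      · exact absurd h' h
    · have hz1 : (ε * ε - 1) * M⁻¹ 1 0 = 0 := by
        linear_combination (-(B 1 0)) * hBc 0 + (-(ε + B 1 1)) * hBc 1 +
          M⁻¹ 0 0 * q10 + M⁻¹ 1 0 * q11
      rcases mul_eq_zero.mp hz1 with h' | h'
      · exact sub_eq_zero.mp h'
      · exact absurd h' h
  -- ε comes from ±1 over K
  obtain ⟨ε', hsq', hAne1, hAne2, hfe⟩ :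
      ∃ ε' : K, ε' * ε' = 1 ∧ (ρ c : Matrix (Fin 2) (Fin 2) K) ≠ -(ε' • 1) ∧
        (ρ c : Matrix (Fin 2) (Fin 2) K) ≠ ε' • 1 ∧ f ε' = ε := by
    rcases mul_self_eq_one_iff.mp hεsq with h | h
    · exact ⟨1, by ring, by simpa using hAneg, by simpa using hA1, by simp [h]⟩
    · exact ⟨-1, by ring, by simpa using hA1, by simpa using hAneg, by simp [h]⟩
  -- eigenvector u over K : a nonzero column of C := A + ε'•1
  set C : Matrix (Fin 2) (Fin 2) K := (ρ c : Matrix (Fin 2) (Fin 2) K) + ε' • 1 with hC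
  have hCne : C ≠ 0 := by
    intro h
    exact hAne1 (eq_neg_of_add_eq_zero_left h)
  have hAC : (ρ c : Matrix (Fin 2) (Fin 2) K) * C = ε' • C := by
    rw [hC, mul_add, hA2, mul_smul_comm, mul_one, smul_add, smul_smul, hsq', one_smul]
    exact add_comm _ _
  obtain ⟨j, k, hCjk⟩ : ∃ j k, C j k ≠ 0 := by
    by_contra h
    push_neg at h
    apply hCne
    ext j k
    rw [Matrix.zero_apply]
    exact h j k
  -- A u = ε' u  over K
  have hAu : ∀ i : Fin 2, (ρ c : Matrix (Fin 2) (Fin 2) K) i 0 * C 0 k +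
      (ρ c : Matrix (Fin 2) (Fin 2) K) i 1 * C 1 k = ε' * C i k := by
    intro i
    have h := congrFun (congrFun hAC i) k
    rw [Matrix.mul_apply, Fin.sum_univ_two, Matrix.smul_apply, smul_eq_mul] at h
    exact h
  -- B u' = ε u'  over L
  have hBu : ∀ i : Fin 2, B i 0 * f (C 0 k) + B i 1 * f (C 1 k) = ε * f (C i k) := by
    intro i
    have h := congrArg f (hAu i)
    rw [map_add, _root_.map_mul, _root_.map_mul, _root_.map_mul, hfe] at h
    exact h
  -- B - ε•1 ≠ 0
  have hDne : B - ε • 1 ≠ 0 := by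
    intro h
    apply hAne2
    have hBe : B = ε • 1 := sub_eq_zero.mp h
    ext i j'
    apply hfinj
    show B i j' = f ((ε' • (1 : Matrix (Fin 2) (Fin 2) K)) i j')
    rw [congrFun (congrFun hBe i) j']
    by_cases hij : i = j'
    · simp [Matrix.one_apply, hij, hfe]
    · simp [Matrix.one_apply, hij]
  -- kernel equations for v and u'
  have hone01 : (1 : Matrix (Fin 2) (Fin 2) L) 0 1 = 0 :=
    Matrix.one_apply_ne (by decide)
  have hone10 : (1 : Matrix (Fin 2) (Fin 2) L) 1 0 = 0 :=
    Matrix.one_apply_ne (by decide)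
  have hDv0 : (B - ε • 1) 0 0 * M⁻¹ 0 0 + (B - ε • 1) 0 1 * M⁻¹ 1 0 = 0 := by
    simp only [Matrix.sub_apply, Matrix.smul_apply, smul_eq_mul, Matrix.one_apply_eq, hone01]
    linear_combination hBc 0
  have hDv1 : (B - ε • 1) 1 0 * M⁻¹ 0 0 + (B - ε • 1) 1 1 * M⁻¹ 1 0 = 0 := by
    simp only [Matrix.sub_apply, Matrix.smul_apply, smul_eq_mul, Matrix.one_apply_eq, hone10]
    linear_combination hBc 1
  have hDu0 : (B - ε • 1) 0 0 * f (C 0 k) + (B - ε • 1) 0 1 * f (C 1 k) = 0 := by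
    simp only [Matrix.sub_apply, Matrix.smul_apply, smul_eq_mul, Matrix.one_apply_eq, hone01]
    linear_combination hBu 0
  have hDu1 : (B - ε • 1) 1 0 * f (C 0 k) + (B - ε • 1) 1 1 * f (C 1 k) = 0 := by
    simp only [Matrix.sub_apply, Matrix.smul_apply, smul_eq_mul, Matrix.one_apply_eq, hone10]
    linear_combination hBu 1
  -- u' is proportional to v
  have hcross : f (C 0 k) * M⁻¹ 1 0 = f (C 1 k) * M⁻¹ 0 0 :=
    aux_cross (B - ε • 1) hDne (fun i => f (C i k)) (fun i => M⁻¹ i 0)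
      hDu0 hDu1 hDv0 hDv1
  -- u is a common eigenvector over K
  have hKg : ∀ g : G,
      ((ρ g : Matrix (Fin 2) (Fin 2) K) 0 0 * C 0 k +
        (ρ g : Matrix (Fin 2) (Fin 2) K) 0 1 * C 1 k) * C 1 k =
      ((ρ g : Matrix (Fin 2) (Fin 2) K) 1 0 * C 0 k +
        (ρ g : Matrix (Fin 2) (Fin 2) K) 1 1 * C 1 k) * C 0 k := by
    intro g
    apply hfinj
    rw [_root_.map_mul, map_add, _root_.map_mul, _root_.map_mul, _root_.map_mul, map_add, _root_.map_mul, _root_.map_mul]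
    exact aux_eig (((ρ g : Matrix (Fin 2) (Fin 2) K)).map f)
      ((M * ((ρ g : Matrix (Fin 2) (Fin 2) K)).map f * M⁻¹) 0 0)
      (fun i => M⁻¹ i 0) (fun i => f (C i k)) hvne
      (key _ (hMtri g) 0) (key _ (hMtri g) 1) hcross
  -- build the triangularizing unit over K
  have hu : C 0 k ≠ 0 ∨ C 1 k ≠ 0 := by
    fin_cases j
    · exact Or.inl hCjk
    · exact Or.inr hCjk
  by_cases h0 : C 0 k = 0
  · -- C 0 k = 0, so C 1 k ≠ 0
    have h1 : C 1 k ≠ 0 := by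
      rcases hu with h | h
      · exact absurd h0 h
      · exact h
    refine ⟨⟨!![0, (C 1 k)⁻¹; 1, 0], !![0, 1; C 1 k, 0], ?_, ?_⟩, ?_⟩
    · ext i j'
      fin_cases i <;> fin_cases j' <;>
        simp [Matrix.mul_apply, Fin.sum_univ_two] <;> field_simp
    · ext i j'
      fin_cases i <;> fin_cases j' <;>
        simp [Matrix.mul_apply, Fin.sum_univ_two] <;> field_simp
    · intro g
      show (!![0, (C 1 k)⁻¹; 1, 0] * (ρ g : Matrix (Fin 2) (Fin 2) K) *
        !![0, 1; C 1 k, 0]) 1 0 = 0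
      have h := hKg g
      rw [h0] at h
      have h' : (ρ g : Matrix (Fin 2) (Fin 2) K) 0 1 * C 1 k = 0 := by
        have h'' : ((ρ g : Matrix (Fin 2) (Fin 2) K) 0 1 * C 1 k) * C 1 k = 0 := by
          linear_combination h
        rcases mul_eq_zero.mp h'' with h2 | h2
        · exact h2
        · exact absurd h2 h1
      simp only [Matrix.mul_apply, Fin.sum_univ_two]
      simp only [Matrix.cons_val', Matrix.cons_val_zero, Matrix.cons_val_one, Matrix.head_cons,
        Matrix.empty_val', Matrix.cons_val_fin_one, Matrix.head_fin_const, Matrix.of_apply]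
      linear_combination h'
  · -- C 0 k ≠ 0
    refine ⟨⟨!![(C 0 k)⁻¹, 0; -(C 1 k) * (C 0 k)⁻¹, 1], !![C 0 k, 0; C 1 k, 1], ?_, ?_⟩, ?_⟩
    · ext i j'
      fin_cases i <;> fin_cases j' <;>
        simp [Matrix.mul_apply, Fin.sum_univ_two] <;> field_simp <;> ring
    · ext i j'
      fin_cases i <;> fin_cases j' <;>
        simp [Matrix.mul_apply, Fin.sum_univ_two] <;> field_simp
    · intro g
      show (!![(C 0 k)⁻¹, 0; -(C 1 k) * (C 0 k)⁻¹, 1] * (ρ g : Matrix (Fin 2) (Fin 2) K) *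
        !![C 0 k, 0; C 1 k, 1]) 1 0 = 0
      apply mul_left_cancel₀ h0
      rw [mul_zero]
      simp only [Matrix.mul_apply, Fin.sum_univ_two]
      simp only [Matrix.cons_val', Matrix.cons_val_zero, Matrix.cons_val_one, Matrix.head_cons,
        Matrix.empty_val', Matrix.cons_val_fin_one, Matrix.head_fin_const, Matrix.of_apply]
      field_simp
      linear_combination (-1 : K) * hKg g
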